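/- For every natural number x, β(x) ≤ ⌊γ(x)/2⌋, where γ(x) = max{ l : f_l ≤ x } (and γ(0) = 0). -/

import Mathlib

noncomputable def beta (x : ℕ) : ℕ :=
  sInf {k : ℕ | ∃ M : Multiset ℕ,
    (∀ i ∈ M, 2 ≤ i) ∧ (M.map Nat.fib).sum = x ∧ M.card = k}

noncomputable def gamma (x : ℕ) : ℕ := sSup {l : ℕ | Nat.fib l ≤ x}

lemma gammaSet_bdd (x : ℕ) : BddAbove {l : ℕ | Nat.fib l ≤ x} := by
  refine ⟨x + 1, fun l hl => ?_⟩
  exact le_trans (Nat.le_fib_add_one l) (by simpa using Nat.add_le_add_right hl 1)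

lemma gamma_mem (x : ℕ) : Nat.fib (gamma x) ≤ x := by
  have h0 : (0 : ℕ) ∈ {l : ℕ | Nat.fib l ≤ x} := by simp [Nat.fib]
  exact Nat.sSup_mem ⟨0, h0⟩ (gammaSet_bdd x)

lemma le_gamma {x l : ℕ} (h : Nat.fib l ≤ x) : l ≤ gamma x :=
  le_csSup (gammaSet_bdd x) h

lemma lt_fib_gamma_succ (x : ℕ) : x < Nat.fib (gamma x + 1) := by
  by_contra h
  push_neg at h
  have := le_gamma h
  omega

lemma gamma_le {x l : ℕ} (h : ∀ m, Nat.fib m ≤ x → m ≤ l) : gamma x ≤ l :=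
  csSup_le ⟨0, by simp [Nat.fib]⟩ h

lemma beta_step {x l : ℕ} (hl : 2 ≤ l) (hfib : Nat.fib l ≤ x) :
    beta x ≤ beta (x - Nat.fib l) + 1 := by
  set x' := x - Nat.fib l with hx'
  -- the beta set of x' is nonempty (x' copies of fib 2 = 1)
  have hne : ∃ M : Multiset ℕ,
      (∀ i ∈ M, 2 ≤ i) ∧ (M.map Nat.fib).sum = x' ∧ M.card = x' := by
    refine ⟨Multiset.replicate x' 2, ?_, ?_, ?_⟩
    · intro i hi; rw [Multiset.eq_of_mem_replicate hi]
    · simp [Multiset.map_replicate, Multiset.sum_replicate, Nat.fib]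
    · simp
  have hmem := Nat.sInf_mem (⟨x', hne⟩ : Set.Nonempty {k : ℕ | ∃ M : Multiset ℕ,
    (∀ i ∈ M, 2 ≤ i) ∧ (M.map Nat.fib).sum = x' ∧ M.card = k})
  obtain ⟨M, hM2, hMsum, hMcard⟩ := hmem
  refine Nat.sInf_le ⟨l ::ₘ M, ?_, ?_, ?_⟩
  · intro i hi
    rcases Multiset.mem_cons.mp hi with h | h
    · omega
    · exact hM2 i h
  · simp [hMsum, hx']; omega
  · simp [hMcard, beta]

theorem beta_le_half_gamma (x : ℕ) : beta x ≤ gamma x / 2 := by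
  induction x using Nat.strong_induction_on with
  | _ x ih =>
    rcases Nat.eq_zero_or_pos x with rfl | hx
    · have : beta 0 = 0 := by
        refine Nat.le_antisymm ?_ (Nat.zero_le _)
        exact Nat.sInf_le ⟨0, by simp, by simp, by simp⟩
      simp [this]
    · set l := gamma x with hl
      have h2 : 2 ≤ l := le_gamma (by simp [Nat.fib]; omega)
      have hfib : Nat.fib l ≤ x := gamma_mem x
      have hfibpos : 0 < Nat.fib l := Nat.fib_pos.mpr (by omega)
      have hx' : x - Nat.fib l < x := by omega
      have hgx' : gamma (x - Nat.fib l) ≤ l - 2 := by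
        apply gamma_le
        intro m hm
        by_contra hml
        push_neg at hml
        have hm1 : l - 1 ≤ m := by omega
        have : Nat.fib (l - 1) ≤ Nat.fib m := Nat.fib_mono hm1
        obtain ⟨k, hk⟩ : ∃ k, l = k + 2 := ⟨l - 2, by omega⟩
        have hsum : Nat.fib (l - 1) + Nat.fib l = Nat.fib (l + 1) := by
          rw [hk]
          simp only [show k + 2 - 1 = k + 1 from rfl, show k + 2 + 1 = (k + 1) + 2 from rfl,
            Nat.fib_add_two]
        have hlt := lt_fib_gamma_succ x
        rw [← hl] at hlt
        omega
      have hstep := beta_step h2 hfib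
      have hih := ih _ hx'
      omega
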